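/- Combinatorial Hodge theorem: the kernel of the Hodge Laplacian L_i is isomorphic to the i-th simplicial homology with real coefficients, i.e., ker L_i ≅ ker ∂_i / im ∂_{i+1}. -/

import Mathlib

open Module Submodule LinearMap RealInnerProductSpace

private lemma ker_adjoint_eq_orth {E F : Type*}
    [NormedAddCommGroup E] [InnerProductSpace ℝ E] [FiniteDimensional ℝ E]
    [NormedAddCommGroup F] [InnerProductSpace ℝ F] [FiniteDimensional ℝ F]
    (A : E →ₗ[ℝ] F) : LinearMap.ker (LinearMap.adjoint A) = (LinearMap.range A)ᗮ := by
  ext x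
  simp only [LinearMap.mem_ker, Submodule.mem_orthogonal]
  constructor
  · rintro hx u ⟨z, rfl⟩
    rw [← LinearMap.adjoint_inner_right, real_inner_comm, hx, inner_zero_left]
  · intro hx
    have h0 : (inner ℝ (LinearMap.adjoint A x) (LinearMap.adjoint A x) : ℝ) = 0 := by
      rw [LinearMap.adjoint_inner_left, real_inner_comm]
      exact hx _ ⟨_, rfl⟩
    exact inner_self_eq_zero.mp h0

private lemma ker_L_eq {Cm Ci Cp : Type*}
    [NormedAddCommGroup Cm] [InnerProductSpace ℝ Cm] [FiniteDimensional ℝ Cm]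
    [NormedAddCommGroup Ci] [InnerProductSpace ℝ Ci] [FiniteDimensional ℝ Ci]
    [NormedAddCommGroup Cp] [InnerProductSpace ℝ Cp] [FiniteDimensional ℝ Cp]
    (d1 : Ci →ₗ[ℝ] Cm) (d2 : Cp →ₗ[ℝ] Ci) :
    LinearMap.ker (d2 ∘ₗ LinearMap.adjoint d2 + LinearMap.adjoint d1 ∘ₗ d1)
      = (LinearMap.range d2)ᗮ ⊓ LinearMap.ker d1 := by
  ext x
  simp only [LinearMap.mem_ker, Submodule.mem_inf, LinearMap.add_apply, LinearMap.comp_apply,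
    ← ker_adjoint_eq_orth d2]
  constructor
  · intro hx
    have h0 : (inner ℝ (d2 (LinearMap.adjoint d2 x) + LinearMap.adjoint d1 (d1 x)) (x) : ℝ) = 0 := by
      rw [hx, inner_zero_left]
    rw [inner_add_left] at h0
    have ea : (inner ℝ (d2 (LinearMap.adjoint d2 x)) x : ℝ)
        = inner ℝ (LinearMap.adjoint d2 x) (LinearMap.adjoint d2 x) :=
      (LinearMap.adjoint_inner_right d2 _ x).symm
    have eb : (inner ℝ (LinearMap.adjoint d1 (d1 x)) x : ℝ) = inner ℝ (d1 x) (d1 x) :=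
      LinearMap.adjoint_inner_left d1 x _
    rw [ea, eb] at h0
    have h1 : (0:ℝ) ≤ (inner ℝ (LinearMap.adjoint d2 x) (LinearMap.adjoint d2 x) : ℝ) :=
      real_inner_self_nonneg
    have h2 : (0:ℝ) ≤ (inner ℝ (d1 x) (d1 x) : ℝ) := real_inner_self_nonneg
    have e1 : (inner ℝ (LinearMap.adjoint d2 x) (LinearMap.adjoint d2 x) : ℝ) = 0 := by linarith
    have e2 : (inner ℝ (d1 x) (d1 x) : ℝ) = 0 := by linarith
    exact ⟨inner_self_eq_zero.mp e1, inner_self_eq_zero.mp e2⟩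
  · rintro ⟨h1, h2⟩
    rw [h1, h2, map_zero, map_zero, add_zero]

/-- Combinatorial Hodge theorem: for a real chain complex
`C_{i+1} →∂₂ C_i →∂₁ C_{i-1}` of finite-dimensional inner product spaces with
`∂₁ ∘ ∂₂ = 0`, the kernel of the Hodge Laplacian
`L = ∂₂ ∂₂ᵀ + ∂₁ᵀ ∂₁` is isomorphic to the `i`-th homology `ker ∂₁ / im ∂₂`. -/
theorem ker_hodgeLaplacian_iso_homology
    {Cm Ci Cp : Type*}
    [NormedAddCommGroup Cm] [InnerProductSpace ℝ Cm] [FiniteDimensional ℝ Cm]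
    [NormedAddCommGroup Ci] [InnerProductSpace ℝ Ci] [FiniteDimensional ℝ Ci]
    [NormedAddCommGroup Cp] [InnerProductSpace ℝ Cp] [FiniteDimensional ℝ Cp]
    (d1 : Ci →ₗ[ℝ] Cm) (d2 : Cp →ₗ[ℝ] Ci) (h : d1 ∘ₗ d2 = 0) :
    Nonempty
      ((LinearMap.ker
          (d2 ∘ₗ LinearMap.adjoint d2 + LinearMap.adjoint d1 ∘ₗ d1)) ≃ₗ[ℝ]
        (LinearMap.ker d1 ⧸
          Submodule.comap (LinearMap.ker d1).subtype (LinearMap.range d2))) := by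
  have hle : LinearMap.range d2 ≤ LinearMap.ker d1 := by
    rintro _ ⟨z, rfl⟩
    have : d1 (d2 z) = 0 := by
      have := congrArg (fun f => f z) h
      simpa using this
    simpa [LinearMap.mem_ker] using this
  apply FiniteDimensional.nonempty_linearEquiv_of_finrank_eq
  -- finrank of quotient
  have hq : finrank ℝ (LinearMap.ker d1 ⧸
        Submodule.comap (LinearMap.ker d1).subtype (LinearMap.range d2))
      + finrank ℝ (LinearMap.range d2) = finrank ℝ (LinearMap.ker d1) := by
    have := Submodule.finrank_quotient_add_finrank
      (Submodule.comap (LinearMap.ker d1).subtype (LinearMap.range d2))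
    rwa [(Submodule.comapSubtypeEquivOfLe hle).finrank_eq] at this
  -- finrank of kernel of L
  have hk : finrank ℝ ((LinearMap.range d2)ᗮ ⊓ LinearMap.ker d1 : Submodule ℝ Ci)
      + finrank ℝ (LinearMap.range d2) = finrank ℝ (LinearMap.ker d1) := by
    have hsup : LinearMap.range d2 ⊔ ((LinearMap.range d2)ᗮ ⊓ LinearMap.ker d1)
        = LinearMap.ker d1 := Submodule.sup_orthogonal_inf_of_hasOrthogonalProjection hle
    have hdisj : LinearMap.range d2 ⊓ ((LinearMap.range d2)ᗮ ⊓ LinearMap.ker d1) = ⊥ := by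
      rw [← inf_assoc]
      rw [(Submodule.orthogonal_disjoint (LinearMap.range d2)).eq_bot]
      exact bot_inf_eq _
    have := Submodule.finrank_sup_add_finrank_inf_eq
      (LinearMap.range d2) ((LinearMap.range d2)ᗮ ⊓ LinearMap.ker d1)
    rw [hsup, hdisj] at this
    simp only [finrank_bot, add_zero] at this
    omega
  rw [ker_L_eq d1 d2]
  omega
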